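/- (Countable sum theorem for covering dimension) Let $X$ be a normal topological space with $X = \bigcup_{i=1}^\infty X_i$, where each $X_i$ is a closed subspace of $X$ with covering dimension $\dim X_i \le n$. Then $\dim X \le n$. -/

import Mathlib

/-- `CoveringDimLE X n`: every finite open cover of `X` has a finite open refinement in which
each point lies in at most `n + 1` sets (Lebesgue covering dimension `≤ n`). -/
def CoveringDimLE (X : Type*) [TopologicalSpace X] (n : ℕ) : Prop :=
  ∀ (ι : Type) (U : ι → Set X), Finite ι → (∀ i, IsOpen (U i)) → (⋃ i, U i) = Set.univ →
    ∃ (κ : Type) (V : κ → Set X), Finite κ ∧ (∀ k, IsOpen (V k)) ∧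
      (⋃ k, V k) = Set.univ ∧ (∀ k, ∃ i, V k ⊆ U i) ∧
      ∀ x : X, Nat.card {k : κ // x ∈ V k} ≤ n + 1

section Helpers

open Set Topology

variable {X : Type*} [TopologicalSpace X]

/-- If all (n+2)-fold intersections vanish, each point lies in at most n+1 sets. -/
lemma aux_ord_le {ι : Type*} [Finite ι] (G : ι → Set X) (n : ℕ) (x : X)
    (h : ∀ T : Finset ι, T.card = n + 2 → (⋂ t ∈ T, G t) = ∅) :
    Set.ncard {s | x ∈ G s} ≤ n + 1 := by
  classical
  by_contra hc
  push_neg at hc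
  obtain ⟨t, hts, htc⟩ := Set.exists_subset_card_eq (show n + 2 ≤ ({s | x ∈ G s}).ncard from hc)
  have htfin : t.Finite := Set.toFinite t
  have hT : htfin.toFinset.card = n + 2 := by
    rw [Set.ncard_eq_toFinset_card _ htfin] at htc; exact htc
  have := h htfin.toFinset hT
  have hx : x ∈ ⋂ s ∈ htfin.toFinset, G s := by
    simp only [Set.mem_iInter]
    intro s hs
    exact hts (htfin.mem_toFinset.mp hs)
  rw [this] at hx
  exact hx

/-- Conversely, pointwise order ≤ n+1 kills all (n+2)-fold intersections. -/
lemma aux_inter_empty {ι : Type*} [Finite ι] (F : ι → Set X) (n : ℕ)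
    (h : ∀ x : X, Set.ncard {s | x ∈ F s} ≤ n + 1) :
    ∀ T : Finset ι, T.card = n + 2 → (⋂ t ∈ T, F t) = ∅ := by
  intro T hT
  rw [Set.eq_empty_iff_forall_notMem]
  intro y hy
  simp only [Set.mem_iInter] at hy
  have hsub : (T : Set ι) ⊆ {s | y ∈ F s} := fun s hs => hy s hs
  have := Set.ncard_le_ncard hsub (Set.toFinite _)
  rw [Set.ncard_coe_finset, hT] at this
  have h2 := h y
  omega

/-- Swelling lemma: a finite closed family can be swelled to an open family with the same
empty intersections, inside given open neighborhoods. -/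
lemma swelling [NormalSpace X] {ι : Type*} [Finite ι] (F U : ι → Set X)
    (hFc : ∀ s, IsClosed (F s)) (hUo : ∀ s, IsOpen (U s)) (hFU : ∀ s, F s ⊆ U s) :
    ∃ G : ι → Set X, (∀ s, IsOpen (G s)) ∧ (∀ s, F s ⊆ G s) ∧ (∀ s, G s ⊆ U s) ∧
      ∀ T : Finset ι, (⋂ t ∈ T, F t) = ∅ → (⋂ t ∈ T, G t) = ∅ := by
  classical
  have : Fintype ι := Fintype.ofFinite ι
  suffices h : ∀ P : Finset ι, ∃ H : ι → Set X,
      (∀ s ∈ P, IsOpen (H s)) ∧ (∀ s ∉ P, H s = F s) ∧ (∀ s, F s ⊆ H s) ∧ (∀ s, H s ⊆ U s) ∧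
      ∀ T : Finset ι, (⋂ t ∈ T, F t) = ∅ → (⋂ t ∈ T, closure (H t)) = ∅ by
    obtain ⟨H, h1, _, h3, h4, h5⟩ := h Finset.univ
    refine ⟨H, fun s => h1 s (Finset.mem_univ s), h3, h4, fun T hT => ?_⟩
    have := h5 T hT
    have hsub : (⋂ t ∈ T, H t) ⊆ ⋂ t ∈ T, closure (H t) :=
      Set.iInter₂_mono fun t _ => subset_closure
    rw [this] at hsub
    exact Set.subset_empty_iff.mp hsub
  intro P
  induction P using Finset.induction_on with
  | empty =>
    refine ⟨F, by simp, fun _ _ => rfl, fun _ => le_refl _, hFU, fun T hT => ?_⟩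
    have : ∀ t ∈ T, closure (F t) = F t := fun t _ => (hFc t).closure_eq
    calc (⋂ t ∈ T, closure (F t)) = ⋂ t ∈ T, F t := Set.iInter₂_congr this
    _ = ∅ := hT
  | @insert a P ha ih =>
    obtain ⟨H, h1, h2, h3, h4, h5⟩ := ih
    -- the "forbidden" closed set
    set D : Set X := ⋃ T ∈ {T : Finset ι | a ∉ T ∧ (⋂ t ∈ insert a T, F t) = ∅},
      ⋂ t ∈ T, closure (H t) with hD
    have hDc : IsClosed D :=
      Set.Finite.isClosed_biUnion (Set.toFinite _)
        (fun T _ => isClosed_biInter fun t _ => isClosed_closure)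
    have hdisj : Disjoint (F a) D := by
      rw [Set.disjoint_right]
      rintro x hxD hxF
      rw [hD, Set.mem_iUnion₂] at hxD
      obtain ⟨T, ⟨haT, hTF⟩, hxd⟩ := hxD
      have hempty := h5 (insert a T) hTF
      have hxin : x ∈ ⋂ t ∈ insert a T, closure (H t) := by
        simp only [Set.mem_iInter, Finset.mem_insert] at hxd ⊢
        rintro t (rfl | ht)
        · exact subset_closure (h3 t hxF)
        · exact hxd t ht
      rw [hempty] at hxin
      exact hxin
    have hsep : F a ⊆ U a ∩ Dᶜ := fun x hx =>
      ⟨hFU a hx, (Set.disjoint_left.mp hdisj hx : x ∉ D)⟩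
    obtain ⟨Ga, hGao, hFGa, hGacl⟩ :=
      normal_exists_closure_subset (hFc a) ((hUo a).inter hDc.isOpen_compl) hsep
    refine ⟨Function.update H a Ga, ?_, ?_, ?_, ?_, ?_⟩
    · intro s hs
      rcases eq_or_ne s a with rfl | hne
      · rwa [Function.update_self]
      · rw [Function.update_of_ne hne]
        exact h1 s ((Finset.mem_insert.mp hs).resolve_left hne)
    · intro s hs
      have hne : s ≠ a := fun h => hs (h ▸ Finset.mem_insert_self a P)
      rw [Function.update_of_ne hne]
      exact h2 s (fun h => hs (Finset.mem_insert_of_mem h))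
    · intro s
      rcases eq_or_ne s a with rfl | hne
      · rwa [Function.update_self]
      · rw [Function.update_of_ne hne]; exact h3 s
    · intro s
      rcases eq_or_ne s a with rfl | hne
      · rw [Function.update_self]
        exact fun x hx => ((subset_closure.trans hGacl) hx).1
      · rw [Function.update_of_ne hne]; exact h4 s
    · intro T hT
      by_cases haT : a ∈ T
      · -- split off a
        have hTa : insert a (T.erase a) = T := Finset.insert_erase haT
        have hmem : (⋂ t ∈ T.erase a, closure (H t)) ⊆ D := by
          intro x hx
          rw [hD, Set.mem_iUnion₂]
          exact ⟨T.erase a, ⟨Finset.notMem_erase a T, by rwa [hTa]⟩, hx⟩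
        rw [Set.eq_empty_iff_forall_notMem]
        intro x hx
        simp only [Set.mem_iInter] at hx
        have hxa : x ∈ closure Ga := by
          have := hx a haT
          rwa [Function.update_self] at this
        have hxD : x ∈ D := by
          apply hmem
          simp only [Set.mem_iInter]
          intro t ht
          have hne : t ≠ a := Finset.ne_of_mem_erase ht
          have := hx t (Finset.mem_of_mem_erase ht)
          rwa [Function.update_of_ne hne] at this
        exact (hGacl hxa).2 hxD
      · have : ∀ t ∈ T, closure (Function.update H a Ga t) = closure (H t) := by
          intro t ht
          rw [Function.update_of_ne (by rintro rfl; exact haT ht)]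
        calc (⋂ t ∈ T, closure (Function.update H a Ga t)) = ⋂ t ∈ T, closure (H t) :=
              Set.iInter₂_congr this
        _ = ∅ := h5 T hT

/-- From a covering-dimension bound we get a *shrinking* (same index set) of bounded order. -/
lemma shrink_of_dim {Y : Type*} [TopologicalSpace Y] {n : ℕ} (hd : CoveringDimLE Y n)
    {ι : Type} [Finite ι] (U : ι → Set Y) (hUo : ∀ s, IsOpen (U s))
    (hUc : (⋃ s, U s) = Set.univ) :
    ∃ V : ι → Set Y, (∀ s, IsOpen (V s)) ∧ (⋃ s, V s) = Set.univ ∧ (∀ s, V s ⊆ U s) ∧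
      ∀ y, Set.ncard {s | y ∈ V s} ≤ n + 1 := by
  classical
  obtain ⟨κ, W, hκ, hWo, hWc, href, hord⟩ := hd ι U ‹Finite ι› hUo hUc
  haveI : Finite κ := hκ
  choose φ hφ using href
  refine ⟨fun s => ⋃ (k : κ) (_ : φ k = s), W k, ?_, ?_, ?_, ?_⟩
  · exact fun s => isOpen_iUnion fun k => isOpen_iUnion fun _ => hWo k
  · rw [Set.eq_univ_iff_forall]
    intro y
    have : y ∈ ⋃ k, W k := hWc ▸ Set.mem_univ y
    obtain ⟨k, hk⟩ := Set.mem_iUnion.mp this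
    exact Set.mem_iUnion.mpr ⟨φ k, Set.mem_iUnion.mpr ⟨k, Set.mem_iUnion.mpr ⟨rfl, hk⟩⟩⟩
  · intro s y hy
    simp only [Set.mem_iUnion] at hy
    obtain ⟨k, rfl, hk⟩ := hy
    exact hφ k hk
  · intro y
    have hc : ∀ p : {s | y ∈ ⋃ (k : κ) (_ : φ k = s), W k}, ∃ k : κ, φ k = p.1 ∧ y ∈ W k := by
      rintro ⟨s, hs⟩
      simp only [Set.mem_setOf_eq, Set.mem_iUnion] at hs
      obtain ⟨k, hk1, hk2⟩ := hs
      exact ⟨k, hk1, hk2⟩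
    choose f hf1 hf2 using hc
    have hinj : Function.Injective (fun p => (⟨f p, hf2 p⟩ : {k : κ // y ∈ W k})) := by
      intro p q hpq
      have hfe : f p = f q := congrArg Subtype.val hpq
      apply Subtype.ext
      rw [← hf1 p, ← hf1 q, hfe]
    rw [← Nat.card_coe_set_eq]
    exact le_trans (Nat.card_le_card_of_injective _ hinj) (hord y)

/-- One step: improve an open cover so its order is ≤ n+1 also on a closed set `C` of
covering dimension ≤ n, while shrinking (with closures) into the old cover. -/
lemma dim_step [NormalSpace X] {ι : Type} [Finite ι] {n : ℕ} {C : Set X} (hCc : IsClosed C)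
    (hdim : CoveringDimLE C n) (B : Set X) (W : ι → Set X) (hWo : ∀ s, IsOpen (W s))
    (hWc : (⋃ s, W s) = Set.univ) (hB : ∀ x ∈ B, Set.ncard {s | x ∈ W s} ≤ n + 1) :
    ∃ W' : ι → Set X, (∀ s, IsOpen (W' s)) ∧ (⋃ s, W' s) = Set.univ ∧
      (∀ s, closure (W' s) ⊆ W s) ∧ ∀ x ∈ B ∪ C, Set.ncard {s | x ∈ W' s} ≤ n + 1 := by
  classical
  -- restrict the cover to C
  set U' : ι → Set C := fun s => Subtype.val ⁻¹' (W s) with hU'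
  have hU'o : ∀ s, IsOpen (U' s) := fun s => (hWo s).preimage continuous_subtype_val
  have hU'c : (⋃ s, U' s) = Set.univ := by
    rw [Set.eq_univ_iff_forall]
    intro y
    have : (y : X) ∈ ⋃ s, W s := hWc ▸ Set.mem_univ _
    obtain ⟨s, hs⟩ := Set.mem_iUnion.mp this
    exact Set.mem_iUnion.mpr ⟨s, hs⟩
  obtain ⟨V, hVo, hVc, hVU, hVord⟩ := shrink_of_dim hdim U' hU'o hU'c
  -- lift the subspace-open sets to open sets of X
  have hlift : ∀ s, ∃ G0 : Set X, IsOpen G0 ∧ Subtype.val ⁻¹' G0 = V s := by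
    intro s
    obtain ⟨G0, hG0o, hG0⟩ := isOpen_induced_iff.mp (hVo s)
    exact ⟨G0, hG0o, hG0⟩
  choose G0 hG0o hG0 using hlift
  set G : ι → Set X := fun s => G0 s ∩ W s with hG
  have hGo : ∀ s, IsOpen (G s) := fun s => (hG0o s).inter (hWo s)
  have key : ∀ (x : X) (hx : x ∈ C) (s : ι), x ∈ G s ↔ (⟨x, hx⟩ : C) ∈ V s := by
    intro x hx s
    constructor
    · intro hxG
      rw [← hG0 s]
      exact hxG.1
    · intro hxV
      refine ⟨?_, hVU s hxV⟩
      rw [← hG0 s] at hxV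
      exact hxV
  have hCU : C ⊆ ⋃ s, G s := by
    intro x hx
    have : (⟨x, hx⟩ : C) ∈ ⋃ s, V s := hVc ▸ Set.mem_univ _
    obtain ⟨s, hs⟩ := Set.mem_iUnion.mp this
    exact Set.mem_iUnion.mpr ⟨s, (key x hx s).mpr hs⟩
  obtain ⟨O, hOo, hCO, hOcl⟩ :=
    normal_exists_closure_subset hCc (isOpen_iUnion hGo) hCU
  set A : Set X := closure O with hA
  set W2 : ι → Set X := fun s => G s ∪ (W s \ A) with hW2
  have hW2o : ∀ s, IsOpen (W2 s) := fun s =>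
    (hGo s).union ((hWo s).sdiff isClosed_closure)
  have hW2sub : ∀ s, W2 s ⊆ W s := by
    intro s x hx
    rcases hx with hx | hx
    · exact hx.2
    · exact hx.1
  have hW2c : (⋃ s, W2 s) = Set.univ := by
    rw [Set.eq_univ_iff_forall]
    intro x
    by_cases hxA : x ∈ A
    · obtain ⟨s, hs⟩ := Set.mem_iUnion.mp (hOcl hxA)
      exact Set.mem_iUnion.mpr ⟨s, Or.inl hs⟩
    · have : x ∈ ⋃ s, W s := hWc ▸ Set.mem_univ _
      obtain ⟨s, hs⟩ := Set.mem_iUnion.mp this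
      exact Set.mem_iUnion.mpr ⟨s, Or.inr ⟨hs, hxA⟩⟩
  have hW2ord : ∀ x ∈ B ∪ C, Set.ncard {s | x ∈ W2 s} ≤ n + 1 := by
    rintro x (hxB | hxC)
    · exact le_trans (Set.ncard_le_ncard (fun s hs => hW2sub s hs) (Set.toFinite _)) (hB x hxB)
    · have hxA : x ∈ A := subset_closure (hCO hxC)
      have hset : {s | x ∈ W2 s} = {s | (⟨x, hxC⟩ : C) ∈ V s} := by
        ext s
        simp only [Set.mem_setOf_eq]
        constructor
        · rintro (hg | hw)
          · exact (key x hxC s).mp hg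
          · exact absurd hxA hw.2
        · intro hv
          exact Or.inl ((key x hxC s).mpr hv)
      rw [hset]
      exact hVord _
  -- final shrink to get the closure condition
  obtain ⟨W', hW'c, hW'o, hW'cl⟩ :=
    exists_iUnion_eq_closure_subset hW2o (fun x => Set.toFinite _) hW2c
  refine ⟨W', hW'o, hW'c, fun s => (hW'cl s).trans (hW2sub s), ?_⟩
  intro x hx
  refine le_trans (Set.ncard_le_ncard ?_ (Set.toFinite _)) (hW2ord x hx)
  exact fun s hs => (hW'cl s) (subset_closure hs)

end Helpers

/-- the countable sum theorem for covering dimension. -/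
theorem stmt_12 (X : Type*) [TopologicalSpace X] [NormalSpace X] (n : ℕ)
    (Xs : ℕ → Set X) (hclosed : ∀ i, IsClosed (Xs i)) (hcover : (⋃ i, Xs i) = Set.univ)
    (hdim : ∀ i, CoveringDimLE (Xs i) n) :
    CoveringDimLE X n := by
  classical
  intro ι U hι hUo hUc
  haveI : Finite ι := hι
  set B : ℕ → Set X := fun i => ⋃ j ∈ Finset.range i, Xs j with hB
  set Good : ℕ → (ι → Set X) → Prop := fun i W =>
    (∀ s, IsOpen (W s)) ∧ (⋃ s, W s) = Set.univ ∧
      ∀ x ∈ B i, Set.ncard {s | x ∈ W s} ≤ n + 1 with hGood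
  have hstep : ∀ i (W : ι → Set X), Good i W →
      ∃ W', Good (i + 1) W' ∧ ∀ s, closure (W' s) ⊆ W s := by
    rintro i W ⟨h1, h2, h3⟩
    obtain ⟨W', a1, a2, a3, a4⟩ := dim_step (hclosed i) (hdim i) (B i) W h1 h2 h3
    refine ⟨W', ⟨a1, a2, ?_⟩, a3⟩
    intro x hx
    apply a4
    have : B (i + 1) ⊆ B i ∪ Xs i := by
      intro y hy
      simp only [hB, Set.mem_iUnion, Finset.mem_range, exists_prop] at hy
      obtain ⟨j, hj, hyj⟩ := hy
      rcases Nat.lt_succ_iff_lt_or_eq.mp hj with hj' | rfl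
      · exact Or.inl (Set.mem_biUnion (Finset.mem_range.mpr hj') hyj)
      · exact Or.inr hyj
    exact this hx
  choose! stepf hstep1 hstep2 using hstep
  have good0 : Good 0 U := by
    refine ⟨hUo, hUc, ?_⟩
    intro x hx
    simp [hB] at hx
  let seq : ∀ i : ℕ, {W : ι → Set X // Good i W} :=
    fun i => Nat.rec ⟨U, good0⟩ (fun i p => ⟨stepf i p.1, hstep1 i p.1 p.2⟩) i
  have hseqcl : ∀ i s, closure ((seq (i + 1)).1 s) ⊆ (seq i).1 s := fun i s =>
    hstep2 i (seq i).1 (seq i).2 s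
  have hopen : ∀ i s, IsOpen ((seq i).1 s) := fun i => (seq i).2.1
  have hcov : ∀ i, (⋃ s, (seq i).1 s) = Set.univ := fun i => (seq i).2.2.1
  have hord : ∀ i, ∀ x ∈ B i, Set.ncard {s | x ∈ (seq i).1 s} ≤ n + 1 :=
    fun i => (seq i).2.2.2
  have hmono : ∀ i s, (seq (i + 1)).1 s ⊆ (seq i).1 s :=
    fun i s => subset_closure.trans (hseqcl i s)
  have hmono' : ∀ i j, i ≤ j → ∀ s, (seq j).1 s ⊆ (seq i).1 s := by
    intro i j hij
    obtain ⟨k, rfl⟩ := Nat.exists_eq_add_of_le hij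
    induction k with
    | zero => exact fun s => subset_rfl
    | succ k ih =>
      intro s
      have h1 : (seq (i + (k + 1))).1 s ⊆ (seq (i + k)).1 s := by
        have := hmono (i + k) s
        rw [show i + (k + 1) = i + k + 1 by omega]; exact this
      exact h1.trans (ih (Nat.le_add_right i k) s)
  set F : ι → Set X := fun s => ⋂ i, (seq i).1 s with hF
  have hFcl : ∀ s, IsClosed (F s) := by
    intro s
    have : F s = ⋂ i, closure ((seq (i + 1)).1 s) := by
      apply Set.Subset.antisymm
      · exact Set.subset_iInter fun i =>
          (Set.iInter_subset _ (i + 1)).trans subset_closure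
      · exact Set.subset_iInter fun i =>
          (Set.iInter_subset _ i).trans (hseqcl i s)
    rw [this]
    exact isClosed_iInter fun i => isClosed_closure
  have hFU : ∀ s, F s ⊆ U s := fun s => Set.iInter_subset _ 0
  have hFcov : ∀ x : X, ∃ s, ∀ i, x ∈ (seq i).1 s := by
    intro x
    set T : ℕ → Set ι := fun i => {s | x ∈ (seq i).1 s} with hT
    set g : ℕ → ℕ := fun i => (T i).ncard with hg
    have hrange : (Set.range g).Nonempty := ⟨g 0, ⟨0, rfl⟩⟩
    obtain ⟨i0, hi0⟩ := Nat.sInf_mem hrange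
    have hmin : ∀ j, g i0 ≤ g j := fun j => hi0 ▸ Nat.sInf_le ⟨j, rfl⟩
    have hTsub : ∀ j, T i0 ⊆ T j := by
      intro j
      rcases le_or_gt i0 j with hij | hij
      · have hsub : T j ⊆ T i0 := fun s hs => hmono' i0 j hij s hs
        have heq := Set.eq_of_subset_of_ncard_le hsub (hmin j) (Set.toFinite _)
        exact heq.ge
      · exact fun s hs => hmono' j i0 hij.le s hs
    have hne : (T i0).Nonempty := by
      have : x ∈ ⋃ s, (seq i0).1 s := (hcov i0) ▸ Set.mem_univ x
      obtain ⟨s, hs⟩ := Set.mem_iUnion.mp this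
      exact ⟨s, hs⟩
    obtain ⟨s, hs⟩ := hne
    exact ⟨s, fun i => hTsub i hs⟩
  have hFcov' : (⋃ s, F s) = Set.univ := by
    rw [Set.eq_univ_iff_forall]
    intro x
    obtain ⟨s, hs⟩ := hFcov x
    exact Set.mem_iUnion.mpr ⟨s, Set.mem_iInter.mpr hs⟩
  have hFord : ∀ x : X, Set.ncard {s | x ∈ F s} ≤ n + 1 := by
    intro x
    have : x ∈ ⋃ i, Xs i := hcover ▸ Set.mem_univ x
    obtain ⟨i, hi⟩ := Set.mem_iUnion.mp this
    have hxB : x ∈ B (i + 1) :=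
      Set.mem_biUnion (Finset.mem_range.mpr (Nat.lt_succ_self i)) hi
    refine le_trans (Set.ncard_le_ncard ?_ (Set.toFinite _)) (hord (i + 1) x hxB)
    intro s hs
    exact Set.mem_iInter.mp hs (i + 1)
  obtain ⟨G, hGo, hFG, hGU, hnerve⟩ := swelling F U hFcl hUo hFU
  refine ⟨ι, G, ‹Finite ι›, hGo, ?_, fun s => ⟨s, hGU s⟩, ?_⟩
  · rw [Set.eq_univ_iff_forall]
    intro x
    obtain ⟨s, hs⟩ := hFcov x
    exact Set.mem_iUnion.mpr ⟨s, hFG s (Set.mem_iInter.mpr hs)⟩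
  · intro x
    have heq : Nat.card {k : ι // x ∈ G k} = Set.ncard {s | x ∈ G s} :=
      Nat.card_coe_set_eq _
    rw [heq]
    exact aux_ord_le G n x fun T hT => hnerve T (aux_inter_empty F n hFord T hT)
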